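/- Let h₁, h₂ ∈ ℝ^n, x⁰ ∈ ℝ^n, ρ > 0, β > 0, and let Π denote the componentwise projection onto the box [0, β]^n. Define z(s) := Π(x⁰ − (1/ρ)(s h₁ + (1−s) h₂)) for s ∈ [0,1], and φ(s) := (a₁ − a₂) + ⟨h₁ − h₂, z(s)⟩ for constants a₁, a₂ ∈ ℝ. Then φ is continuous, piecewise affine, and nonincreasing on [0,1]. -/

import Mathlib

/-- The edge-sweep function `φ` of Case 2 of the proximal subproblem solver is
continuous, piecewise affine (affine in a neighborhood of every point outside a
finite breakpoint set), and nonincreasing on `[0,1]`. -/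
theorem stmt9 (n : ℕ) (h₁ h₂ x0 : Fin n → ℝ) (a₁ a₂ ρ β : ℝ)
    (hρ : 0 < ρ) (hβ : 0 < β) :
    let z : ℝ → Fin n → ℝ := fun s m =>
      min (max (x0 m - ρ⁻¹ * (s * h₁ m + (1 - s) * h₂ m)) 0) β
    let φ : ℝ → ℝ := fun s => (a₁ - a₂) + ∑ m, (h₁ m - h₂ m) * z s m
    ContinuousOn φ (Set.Icc 0 1) ∧
    AntitoneOn φ (Set.Icc 0 1) ∧
    ∃ T : Finset ℝ, ∀ s ∈ Set.Icc (0 : ℝ) 1, s ∉ T →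
      ∃ m b : ℝ, ∀ᶠ u in nhds s, φ u = m * u + b := by
  intro z φ
  classical
  refine ⟨?_, ?_, ?_⟩
  · apply Continuous.continuousOn
    apply continuous_const.add
    apply continuous_finset_sum
    intro m _
    exact continuous_const.mul
      (((continuous_const.sub (continuous_const.mul
        ((continuous_id.mul continuous_const).add
          ((continuous_const.sub continuous_id).mul continuous_const)))).max
        continuous_const).min continuous_const)
  · intro s _ t _ hst
    simp only [φ]
    apply add_le_add_right
    apply Finset.sum_le_sum
    intro m _
    rcases le_total 0 (h₁ m - h₂ m) with hd0 | hd0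
    · apply mul_le_mul_of_nonneg_left _ hd0
      have hg : x0 m - ρ⁻¹ * (t * h₁ m + (1 - t) * h₂ m)
          ≤ x0 m - ρ⁻¹ * (s * h₁ m + (1 - s) * h₂ m) := by
        have h1 : ρ⁻¹ * (s * h₁ m + (1 - s) * h₂ m)
            ≤ ρ⁻¹ * (t * h₁ m + (1 - t) * h₂ m) := by
          apply mul_le_mul_of_nonneg_left _ (by positivity)
          nlinarith
        linarith
      exact min_le_min (max_le_max hg le_rfl) le_rfl
    · apply mul_le_mul_of_nonpos_left _ hd0
      have hg : x0 m - ρ⁻¹ * (s * h₁ m + (1 - s) * h₂ m)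
          ≤ x0 m - ρ⁻¹ * (t * h₁ m + (1 - t) * h₂ m) := by
        have h1 : ρ⁻¹ * (t * h₁ m + (1 - t) * h₂ m)
            ≤ ρ⁻¹ * (s * h₁ m + (1 - s) * h₂ m) := by
          apply mul_le_mul_of_nonneg_left _ (by positivity)
          nlinarith
        linarith
      exact min_le_min (max_le_max hg le_rfl) le_rfl
  · refine ⟨(Finset.univ.image fun m : Fin n =>
        (x0 m - ρ⁻¹ * h₂ m) / (ρ⁻¹ * (h₁ m - h₂ m))) ∪
      (Finset.univ.image fun m : Fin n =>
        (x0 m - ρ⁻¹ * h₂ m - β) / (ρ⁻¹ * (h₁ m - h₂ m))), ?_⟩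
    intro s _ hsT
    have hterm : ∀ m : Fin n, ∃ A B : ℝ,
        ∀ᶠ u in nhds s, (h₁ m - h₂ m) * z u m = A * u + B := by
      intro m
      by_cases hdm : h₁ m - h₂ m = 0
      · exact ⟨0, 0, Filter.Eventually.of_forall fun u => by simp [hdm]⟩
      · have hk : ρ⁻¹ * (h₁ m - h₂ m) ≠ 0 :=
          mul_ne_zero (by positivity) hdm
        set g : ℝ → ℝ := fun u => x0 m - ρ⁻¹ * (u * h₁ m + (1 - u) * h₂ m)
          with hgdef
        have gcont : Continuous g := by
          apply continuous_const.sub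
          exact continuous_const.mul
            ((continuous_id.mul continuous_const).add
              ((continuous_const.sub continuous_id).mul continuous_const))
        have hzeq : ∀ u, z u m = min (max (g u) 0) β := fun u => rfl
        have hg0 : g s ≠ 0 := by
          intro h
          apply hsT
          apply Finset.mem_union_left
          apply Finset.mem_image.mpr
          refine ⟨m, Finset.mem_univ m, ?_⟩
          rw [div_eq_iff hk]
          simp only [hgdef] at h
          ring_nf
          ring_nf at h
          linarith
        have hgβ : g s ≠ β := by
          intro h
          apply hsT
          apply Finset.mem_union_right
          apply Finset.mem_image.mpr
          refine ⟨m, Finset.mem_univ m, ?_⟩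
          rw [div_eq_iff hk]
          simp only [hgdef] at h
          ring_nf
          ring_nf at h
          linarith
        rcases lt_trichotomy (g s) 0 with hlt | heq | hgt
        · refine ⟨0, 0, ?_⟩
          have hev : ∀ᶠ u in nhds s, g u < 0 :=
            (isOpen_lt gcont continuous_const).eventually_mem hlt
          filter_upwards [hev] with u hu
          rw [hzeq u, max_eq_right hu.le, min_eq_left hβ.le]
          ring
        · exact absurd heq hg0
        · rcases lt_trichotomy (g s) β with hltβ | heqβ | hgtβ
          · refine ⟨-(h₁ m - h₂ m) * (ρ⁻¹ * (h₁ m - h₂ m)),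
              (h₁ m - h₂ m) * (x0 m - ρ⁻¹ * h₂ m), ?_⟩
            have hev : ∀ᶠ u in nhds s, 0 < g u ∧ g u < β := by
              have h1 : ∀ᶠ u in nhds s, 0 < g u :=
                (isOpen_lt continuous_const gcont).eventually_mem hgt
              have h2 : ∀ᶠ u in nhds s, g u < β :=
                (isOpen_lt gcont continuous_const).eventually_mem hltβ
              exact h1.and h2
            filter_upwards [hev] with u hu
            rw [hzeq u, max_eq_left hu.1.le, min_eq_left hu.2.le]
            simp only [hgdef]
            ring
          · exact absurd heqβ hgβ
          · refine ⟨0, (h₁ m - h₂ m) * β, ?_⟩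
            have hev : ∀ᶠ u in nhds s, β < g u :=
              (isOpen_lt continuous_const gcont).eventually_mem hgtβ
            filter_upwards [hev] with u hu
            have : max (g u) 0 = g u := max_eq_left (by linarith)
            rw [hzeq u, this, min_eq_right hu.le]
            ring
    choose A B hAB using hterm
    refine ⟨∑ m, A m, (a₁ - a₂) + ∑ m, B m, ?_⟩
    have hall : ∀ᶠ u in nhds s, ∀ m : Fin n,
        (h₁ m - h₂ m) * z u m = A m * u + B m :=
      Filter.eventually_all.mpr hAB
    filter_upwards [hall] with u hu
    simp only [φ]
    rw [Finset.sum_congr rfl fun m _ => hu m]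
    rw [Finset.sum_add_distrib, ← Finset.sum_mul]
    ring
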